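/- Let α ∈ (0,1). For every x ∈ (0,1), x^α ∫_x^1 (1−a)^{α−1} a^{−1} (a−x)^{−α} da = ∫₀^∞ a^{α−1}/(1+a) da = π/sin(πα). In particular the function G₁(x) = x^α ∫_x^1 (1−a)^{α−1} a^{−1} (a−x)^{−α} da is constant on (0,1). -/

import Mathlib

open MeasureTheory Set Filter
open scoped Topology

lemma beta_val (α : ℝ) (hα : α ∈ Set.Ioo (0:ℝ) 1) :
    ∫ u in Set.Ioo (0:ℝ) 1, u ^ (α - 1) * (1 - u) ^ (-α)
      = Real.pi / Real.sin (Real.pi * α) := by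
  have h0 : (0:ℝ) < α := hα.1
  have h1 : α < 1 := hα.2
  have hβ := Complex.Gamma_mul_Gamma_eq_betaIntegral (s := (α:ℂ)) (t := ((1-α:ℝ):ℂ))
    (by simpa using h0) (by simpa using sub_pos.mpr h1)
  have hsum : (α:ℂ) + ((1-α:ℝ):ℂ) = 1 := by push_cast; ring
  rw [hsum, Complex.Gamma_one, one_mul] at hβ
  have hrefl : Complex.Gamma (α:ℂ) * Complex.Gamma (1 - (α:ℂ))
      = ↑Real.pi / Complex.sin (↑Real.pi * (α:ℂ)) := Complex.Gamma_mul_Gamma_one_sub _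
  have hcast : ((1-α:ℝ):ℂ) = 1 - (α:ℂ) := by push_cast; ring
  rw [hcast] at hβ
  have hreal : Complex.betaIntegral (α:ℂ) (1 - (α:ℂ))
      = ((∫ u in (0:ℝ)..1, u ^ (α - 1) * (1 - u) ^ (-α) : ℝ) : ℂ) := by
    rw [Complex.betaIntegral, ← intervalIntegral.integral_ofReal]
    refine intervalIntegral.integral_congr fun u hu => ?_
    rw [Set.uIcc_of_le (by norm_num : (0:ℝ) ≤ 1)] at hu
    rw [show ((α:ℂ) - 1) = ((α - 1 : ℝ) : ℂ) by push_cast; ring,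
      show (1 - (α:ℂ) - 1) = ((-α : ℝ) : ℂ) by push_cast; ring,
      show (1 - (u:ℂ)) = ((1 - u : ℝ) : ℂ) by push_cast; ring,
      ← Complex.ofReal_cpow hu.1, ← Complex.ofReal_cpow (by linarith [hu.2] : (0:ℝ) ≤ 1 - u)]
    push_cast
    ring
  have key : ((∫ u in (0:ℝ)..1, u ^ (α - 1) * (1 - u) ^ (-α) : ℝ) : ℂ)
      = ((Real.pi / Real.sin (Real.pi * α) : ℝ) : ℂ) := by
    rw [← hreal, ← hβ, hrefl]
    push_cast
    ring
  have key' := Complex.ofReal_injective key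
  rw [intervalIntegral.integral_of_le (by norm_num : (0:ℝ) ≤ 1),
    MeasureTheory.integral_Ioc_eq_integral_Ioo] at key'
  exact key'

lemma ioi_val (α : ℝ) (hα : α ∈ Set.Ioo (0:ℝ) 1) :
    (∫ a in Set.Ioi (0:ℝ), a ^ (α - 1) / (1 + a))
      = Real.pi / Real.sin (Real.pi * α) := by
  have h0 : (0:ℝ) < α := hα.1
  have h1 : α < 1 := hα.2
  set f : ℝ → ℝ := fun u => u / (1 - u) with hf
  have himg : f '' Set.Ioo (0:ℝ) 1 = Set.Ioi (0:ℝ) := by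
    ext a
    constructor
    · rintro ⟨u, hu, rfl⟩
      exact div_pos hu.1 (by linarith [hu.2])
    · intro ha
      refine ⟨a / (1 + a), ⟨div_pos ha (by linarith [Set.mem_Ioi.mp ha]),
        (div_lt_one (by linarith [Set.mem_Ioi.mp ha])).mpr (by linarith)⟩, ?_⟩
      have h1a : (0:ℝ) < 1 + a := by linarith [Set.mem_Ioi.mp ha]
      simp only [hf]
      have e : 1 - a / (1 + a) = 1 / (1 + a) := by field_simp; ring
      rw [e]
      field_simp
  have hderiv : ∀ u ∈ Set.Ioo (0:ℝ) 1,
      HasDerivWithinAt f ((1 - u)^2)⁻¹ (Set.Ioo (0:ℝ) 1) u := by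
    intro u hu
    have hne : 1 - u ≠ 0 := by have := hu.2; intro h; rw [sub_eq_zero] at h; linarith
    have := (hasDerivAt_id u).div ((hasDerivAt_id u).const_sub 1) hne
    simp only [id] at this
    convert this.hasDerivWithinAt using 1
    · rfl
    · rfl
    · rfl
    ring
  have hinj : Set.InjOn f (Set.Ioo (0:ℝ) 1) := by
    intro u hu v hv h
    have hu2 : 1 - u ≠ 0 := by intro h'; rw [sub_eq_zero] at h'; linarith [hu.2]
    have hv2 : 1 - v ≠ 0 := by intro h'; rw [sub_eq_zero] at h'; linarith [hv.2]
    simp only [hf] at h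
    field_simp at h
    linarith
  have := MeasureTheory.integral_image_eq_integral_abs_deriv_smul measurableSet_Ioo hderiv hinj
    (fun a => a ^ (α - 1) / (1 + a))
  rw [himg] at this
  rw [this]
  rw [← beta_val α hα]
  refine MeasureTheory.setIntegral_congr_fun measurableSet_Ioo fun u hu => ?_
  have hu0 : (0:ℝ) < u := hu.1
  have hu1 : (0:ℝ) < 1 - u := by linarith [hu.2]
  have hfu : f u = u / (1 - u) := rfl
  rw [smul_eq_mul, hfu]
  have e1 : 1 + u / (1 - u) = (1 - u)⁻¹ := by field_simp; ring
  rw [e1, Real.div_rpow hu0.le hu1.le]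
  rw [Real.rpow_sub hu0, Real.rpow_sub hu1, Real.rpow_one, Real.rpow_neg hu1.le,
    abs_of_pos (by positivity)]
  have h2 : (0:ℝ) < u ^ α := Real.rpow_pos_of_pos hu0 α
  have h3 : (0:ℝ) < (1 - u) ^ α := Real.rpow_pos_of_pos hu1 α
  field_simp
  exact Real.rpow_one _

lemma ioo_val (α : ℝ) (hα : α ∈ Set.Ioo (0:ℝ) 1) (x : ℝ) (hx : x ∈ Set.Ioo (0:ℝ) 1) :
    (∫ a in Set.Ioo x 1, (1 - a) ^ (α - 1) * a⁻¹ * (a - x) ^ (-α))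
      = x ^ (-α) * ∫ a in Set.Ioi (0:ℝ), a ^ (α - 1) / (1 + a) := by
  have hx0 : (0:ℝ) < x := hx.1
  have hx1 : (0:ℝ) < 1 - x := by linarith [hx.2]
  set f : ℝ → ℝ := fun t => x * (t + 1) / (t + x) with hf
  have himg : f '' Set.Ioi (0:ℝ) = Set.Ioo x 1 := by
    ext a
    constructor
    · rintro ⟨t, ht, rfl⟩
      have ht0 : (0:ℝ) < t := ht
      have htx : (0:ℝ) < t + x := by linarith
      constructor
      · rw [lt_div_iff₀ htx]; nlinarith
      · rw [div_lt_one htx]; nlinarith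
    · intro ha
      have hax : (0:ℝ) < a - x := by linarith [ha.1]
      have ha1 : (0:ℝ) < 1 - a := by linarith [ha.2]
      refine ⟨x * (1 - a) / (a - x), Set.mem_Ioi.mpr (by positivity), ?_⟩
      simp only [hf]
      rw [div_eq_iff (by positivity : (0:ℝ) < x * (1 - a) / (a - x) + x).ne']
      field_simp
      ring
  have hderiv : ∀ t ∈ Set.Ioi (0:ℝ),
      HasDerivWithinAt f (x * (x - 1) / (t + x)^2) (Set.Ioi (0:ℝ)) t := by
    intro t ht
    have ht0 : (0:ℝ) < t := ht
    have htx : t + x ≠ 0 := by positivity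
    have := ((hasDerivAt_id t).add_const 1 |>.const_mul x).div
      ((hasDerivAt_id t).add_const x) htx
    simp only [id] at this
    convert this.hasDerivWithinAt using 1
    · rfl
    · rfl
    · rfl
    field_simp
    ring
  have hinj : Set.InjOn f (Set.Ioi (0:ℝ)) := by
    intro t ht s hs h
    have ht0 : (0:ℝ) < t := ht
    have hs0 : (0:ℝ) < s := hs
    simp only [hf] at h
    rw [div_eq_div_iff (by positivity) (by positivity)] at h
    have : x * (x - 1) * (t - s) = 0 := by nlinarith
    have hx1' : x * (x - 1) ≠ 0 := by nlinarith
    have := mul_eq_zero.mp this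
    rcases this with h' | h'
    · exact absurd h' hx1'
    · linarith
  have := MeasureTheory.integral_image_eq_integral_abs_deriv_smul measurableSet_Ioi hderiv hinj
    (fun a => (1 - a) ^ (α - 1) * a⁻¹ * (a - x) ^ (-α))
  rw [himg] at this
  rw [this, ← MeasureTheory.integral_const_mul]
  refine MeasureTheory.setIntegral_congr_fun measurableSet_Ioi fun t ht => ?_
  have ht0 : (0:ℝ) < t := ht
  have htx : (0:ℝ) < t + x := by linarith
  have hfu : f t = x * (t + 1) / (t + x) := rfl
  rw [smul_eq_mul, hfu]
  have e1 : 1 - x * (t + 1) / (t + x) = t * (1 - x) / (t + x) := by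
    field_simp; ring
  have e2 : x * (t + 1) / (t + x) - x = x * (1 - x) / (t + x) := by
    field_simp; ring
  have e3 : |x * (x - 1) / (t + x) ^ 2| = x * (1 - x) / (t + x) ^ 2 := by
    rw [abs_of_nonpos (by apply div_nonpos_of_nonpos_of_nonneg; nlinarith; positivity)]
    ring
  rw [e1, e2, e3]
  rw [Real.div_rpow (by positivity) htx.le, Real.div_rpow (by positivity) htx.le,
    Real.mul_rpow ht0.le hx1.le, Real.mul_rpow hx0.le hx1.le]
  rw [Real.rpow_sub ht0, Real.rpow_sub hx1, Real.rpow_sub htx, Real.rpow_one,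
    Real.rpow_neg hx0.le, Real.rpow_neg hx1.le, Real.rpow_neg htx.le]
  have p1 : (0:ℝ) < t ^ α := Real.rpow_pos_of_pos ht0 α
  have p2 : (0:ℝ) < (1 - x) ^ α := Real.rpow_pos_of_pos hx1 α
  have p3 : (0:ℝ) < (t + x) ^ α := Real.rpow_pos_of_pos htx α
  have p4 : (0:ℝ) < x ^ α := Real.rpow_pos_of_pos hx0 α
  have h1t : (0:ℝ) < 1 + t := by linarith
  have hxt1 : (0:ℝ) < x * (t + 1) := by positivity
  field_simp
  simp only [Real.rpow_one]
  ring

/-- For `α ∈ (0,1)` and every `x ∈ (0,1)`,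
`x^α ∫_x^1 (1−a)^{α−1} a^{−1} (a−x)^{−α} da = ∫₀^∞ a^{α−1}/(1+a) da = π/sin(πα)`;
in particular `G₁(x) = x^α ∫_x^1 (1−a)^{α−1} a^{−1} (a−x)^{−α} da` is constant on `(0,1)`. -/
theorem stmt_17 (α : ℝ) (hα : α ∈ Set.Ioo (0:ℝ) 1) :
    (∀ x ∈ Set.Ioo (0:ℝ) 1,
        x ^ α * ∫ a in Set.Ioo x 1, (1 - a) ^ (α - 1) * a⁻¹ * (a - x) ^ (-α)
          = Real.pi / Real.sin (Real.pi * α)) ∧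
      (∫ a in Set.Ioi (0:ℝ), a ^ (α - 1) / (1 + a))
        = Real.pi / Real.sin (Real.pi * α) := by
  refine ⟨fun x hx => ?_, ioi_val α hα⟩
  rw [ioo_val α hα x hx, ← mul_assoc, ← Real.rpow_add hx.1, add_neg_cancel, Real.rpow_zero,
    one_mul, ioi_val α hα]
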